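/- The group ℤ³ has no subgroup of finite index that admits an injective group homomorphism into F₃ × F₃, where F₃ is the free group of rank 3. -/

import Mathlib

lemma unit_lift_injective :
    Function.Injective (FreeGroup.lift (fun _ : Unit => Multiplicative.ofAdd (1:ℤ))) := by
  set j := FreeGroup.lift (fun _ : Unit => Multiplicative.ofAdd (1:ℤ)) with hj
  have key : ∀ x : FreeGroup Unit,
      j x = Multiplicative.ofAdd (FreeGroup.freeGroupUnitEquivInt x) := by
    intro x
    have hx : FreeGroup.of () ^ (FreeGroup.freeGroupUnitEquivInt x) = x :=
      FreeGroup.freeGroupUnitEquivInt.left_inv x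
    conv_lhs => rw [← hx]
    rw [map_zpow, FreeGroup.lift_apply_of, ← ofAdd_zsmul, smul_eq_mul, mul_one]
  intro x y hxy
  rw [key, key] at hxy
  exact FreeGroup.freeGroupUnitEquivInt.injective (Multiplicative.ofAdd.injective hxy)

-- free group over subsingleton embeds into Multiplicative ℤ
lemma free_subsingleton_embeds (β : Type) [Subsingleton β] :
    ∃ j : FreeGroup β →* Multiplicative ℤ, Function.Injective j := by
  cases isEmpty_or_nonempty β with
  | inl h =>
    haveI : Subsingleton (FreeGroup β) :=
      (haveI : Subsingleton (FreeGroup Empty) :=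
        FreeGroup.freeGroupEmptyEquivUnit.subsingleton
      (FreeGroup.freeGroupCongr (Equiv.equivEmpty β)).toEquiv.subsingleton)
    exact ⟨1, fun a b _ => Subsingleton.elim a b⟩
  | inr h =>
    haveI : Unique β := uniqueOfSubsingleton h.some
    let e : FreeGroup β ≃* FreeGroup Unit :=
      FreeGroup.freeGroupCongr (Equiv.ofUnique β Unit)
    exact ⟨(FreeGroup.lift (fun _ : Unit => Multiplicative.ofAdd (1:ℤ))).comp e.toMonoidHom,
      unit_lift_injective.comp e.injective⟩

-- an abelian free group embeds into Multiplicative ℤ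
lemma comm_free_embeds (G : Type) [Group G] [IsFreeGroup G]
    (hcomm : ∀ x y : G, x * y = y * x) :
    ∃ j : G →* Multiplicative ℤ, Function.Injective j := by
  haveI : Subsingleton (IsFreeGroup.Generators G) := by
    by_contra hns
    rw [not_subsingleton_iff_nontrivial] at hns
    obtain ⟨a, b, hab⟩ := hns
    haveI := Classical.decEq (IsFreeGroup.Generators G)
    let φ : G →* Equiv.Perm (Fin 3) :=
      IsFreeGroup.lift (fun x => if x = a then Equiv.swap 0 1 else Equiv.swap 1 2)
    have h1 : φ (IsFreeGroup.of a) = Equiv.swap 0 1 := by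
      rw [IsFreeGroup.lift_of, if_pos rfl]
    have h2 : φ (IsFreeGroup.of b) = Equiv.swap 1 2 := by
      rw [IsFreeGroup.lift_of, if_neg (Ne.symm hab)]
    have := hcomm (IsFreeGroup.of a) (IsFreeGroup.of b)
    have h3 : φ (IsFreeGroup.of a) * φ (IsFreeGroup.of b)
        = φ (IsFreeGroup.of b) * φ (IsFreeGroup.of a) := by
      rw [← map_mul, ← map_mul, this]
    rw [h1, h2] at h3
    exact absurd h3 (by decide)
  obtain ⟨j, hj⟩ := free_subsingleton_embeds (IsFreeGroup.Generators G)
  exact ⟨j.comp (IsFreeGroup.toFreeGroup G).toMonoidHom,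
    hj.comp (IsFreeGroup.toFreeGroup G).injective⟩

-- ℤ³ does not embed into ℤ²
lemma no_embed_rank :
    ¬ ∃ φ : Multiplicative (Fin 3 → ℤ) →* Multiplicative ℤ × Multiplicative ℤ,
      Function.Injective φ := by
  rintro ⟨φ, hφ⟩
  let ψ : (Fin 3 → ℤ) →+ ℤ × ℤ :=
    { toFun := fun a => ((φ (Multiplicative.ofAdd a)).1.toAdd, (φ (Multiplicative.ofAdd a)).2.toAdd)
      map_zero' := by simp
      map_add' := by
        intro a b
        show (Multiplicative.toAdd (φ (Multiplicative.ofAdd (a + b))).1,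
            Multiplicative.toAdd (φ (Multiplicative.ofAdd (a + b))).2) = _
        rw [show Multiplicative.ofAdd (a + b)
            = Multiplicative.ofAdd a * Multiplicative.ofAdd b from rfl, map_mul]
        rfl }
  have hψ : Function.Injective ψ := by
    intro a b hab
    have h1 := congrArg Prod.fst hab
    have h2 := congrArg Prod.snd hab
    simp only [ψ, AddMonoidHom.coe_mk, ZeroHom.coe_mk] at h1 h2
    have : φ (Multiplicative.ofAdd a) = φ (Multiplicative.ofAdd b) :=
      Prod.ext (Multiplicative.toAdd.injective h1) (Multiplicative.toAdd.injective h2)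
    exact Multiplicative.ofAdd.injective (hφ this)
  have := LinearMap.finrank_le_finrank_of_injective
    (f := ψ.toIntLinearMap) hψ
  simp [Module.finrank_pi, Module.finrank_prod] at this

/-- `ℤ³` has no finite index subgroup admitting an injective group homomorphism into
`F₃ × F₃`, where `F₃` is the free group of rank 3. -/
theorem Z3_no_finite_index_subgroup_embeds_F3xF3 :
    ¬ ∃ K : Subgroup (Multiplicative (Fin 3 → ℤ)), K.FiniteIndex ∧
      ∃ f : K →* FreeGroup (Fin 3) × FreeGroup (Fin 3), Function.Injective f := by
  rintro ⟨K, hK, f, hf⟩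
  set n := K.index with hn
  have hn0 : n ≠ 0 := hK.index_ne_zero
  -- embed ℤ³ into K via g ↦ g^n
  let e : Multiplicative (Fin 3 → ℤ) →* K :=
    { toFun := fun g => ⟨g ^ n, K.pow_index_mem g⟩
      map_one' := by simp
      map_mul' := by intro g h; ext; simp [mul_pow] }
  have he : Function.Injective e := by
    intro g h hgh
    have : g ^ n = h ^ n := congrArg Subtype.val hgh
    have h2 : n • g.toAdd = n • h.toAdd := by
      simpa [toAdd_pow] using congrArg Multiplicative.toAdd this
    exact Multiplicative.toAdd.injective (smul_right_injective (Fin 3 → ℤ) hn0 h2)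
  -- the two projections have abelian free images
  let p₁ : K →* FreeGroup (Fin 3) := (MonoidHom.fst _ _).comp f
  let p₂ : K →* FreeGroup (Fin 3) := (MonoidHom.snd _ _).comp f
  have hcomm : ∀ (p : K →* FreeGroup (Fin 3)) (x y : p.range), x * y = y * x := by
    rintro p ⟨-, k, rfl⟩ ⟨-, k', rfl⟩
    ext
    show p k * p k' = p k' * p k
    rw [← map_mul, ← map_mul, mul_comm]
  obtain ⟨j₁, hj₁⟩ := comm_free_embeds p₁.range (hcomm p₁)
  obtain ⟨j₂, hj₂⟩ := comm_free_embeds p₂.range (hcomm p₂)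
  -- combine into an embedding of K into ℤ × ℤ
  let F : K →* Multiplicative ℤ × Multiplicative ℤ :=
    (j₁.comp p₁.rangeRestrict).prod (j₂.comp p₂.rangeRestrict)
  have hF : Function.Injective F := by
    intro k k' hkk'
    have h1 : p₁.rangeRestrict k = p₁.rangeRestrict k' := hj₁ (congrArg Prod.fst hkk')
    have h2 : p₂.rangeRestrict k = p₂.rangeRestrict k' := hj₂ (congrArg Prod.snd hkk')
    have hp1 : p₁ k = p₁ k' := congrArg Subtype.val h1
    have hp2 : p₂ k = p₂ k' := congrArg Subtype.val h2
    exact hf (Prod.ext hp1 hp2)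
  exact no_embed_rank ⟨F.comp e, hF.comp he⟩
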